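/- Let f be an L(1,2)-edge labeling of the 12-edge graph G and suppose edges x ∈ S_1 and y ∈ S_2 satisfy f(x) = f(y) = c. If the other edge x' of S_1 satisfies |f(x') − c| ≥ 2, then at least one of the values c+1, c−1 is not the label of any edge of G; likewise, if the other edge y' of S_2 satisfies |f(y') − c| ≥ 2, then at least one of c+1, c−1 is not the label of any edge of G. The analogous statements hold with S_3 and S_4 in place of S_1 and S_2. -/

import Mathlib

/-- The infinite square grid `T4`: `(x, y)` and `(x', y')` are adjacent exactly when
`|x - x'| + |y - y'| = 1`. -/
def T4 : SimpleGraph (ℤ × ℤ) where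
  Adj u v := |u.1 - v.1| + |u.2 - v.2| = 1
  symm := by
    constructor
    intro u v h
    rw [abs_sub_comm v.1 u.1, abs_sub_comm v.2 u.2]
    exact h
  loopless := by
    constructor
    intro u h
    simp at h

/-- `f` is an L(1,2)-edge labeling of `G`. -/
def IsL12 {V : Type*} (G : SimpleGraph V) (f : Sym2 V → ℕ) : Prop :=
  (∀ e1 ∈ G.edgeSet, ∀ e2 ∈ G.edgeSet, e1 ≠ e2 → (∃ v, v ∈ e1 ∧ v ∈ e2) →
    f e1 ≠ f e2) ∧
  (∀ e1 ∈ G.edgeSet, ∀ e2 ∈ G.edgeSet, e1 ≠ e2 → ¬ (∃ v, v ∈ e1 ∧ v ∈ e2) →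
    (∃ e3 ∈ G.edgeSet, (∃ v, v ∈ e1 ∧ v ∈ e3) ∧ (∃ v, v ∈ e2 ∧ v ∈ e3)) →
    2 ≤ |(f e1 : ℤ) - (f e2 : ℤ)|)

/-- The corners of the unit square `Q`. -/
def Q : Set (ℤ × ℤ) := {(0,0), (1,0), (1,1), (0,1)}

/-- The 12-edge subgraph `G` of `T4`: all edges of `T4` incident to a corner of `Q`. -/
def G4 : SimpleGraph (ℤ × ℤ) where
  Adj u w := T4.Adj u w ∧ (u ∈ Q ∨ w ∈ Q)
  symm := ⟨fun u w h => ⟨T4.symm.1 _ _ h.1, h.2.symm⟩⟩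
  loopless := ⟨fun u h => T4.loopless.1 u h.1⟩

/-- The central edges: edges of `G` with both endpoints in `Q` (the 4 sides of `Q`). -/
def Central : Set (Sym2 (ℤ × ℤ)) := {e | e ∈ G4.edgeSet ∧ ∀ u ∈ e, u ∈ Q}

/-- The pendant edges of `G` at the corner `u`: edges incident to `u` whose other
endpoint is outside `Q`. -/
def Pendant (u : ℤ × ℤ) : Set (Sym2 (ℤ × ℤ)) :=
  {e | e ∈ G4.edgeSet ∧ u ∈ e ∧ ∃ w ∈ e, w ∉ Q}

/-- `S_1`: the pair of pendant edges at the corner `(0,0)`. -/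
def PS1 : Set (Sym2 (ℤ × ℤ)) := Pendant (0, 0)
/-- `S_2`: the pair of pendant edges at the corner `(1,1)`. -/
def PS2 : Set (Sym2 (ℤ × ℤ)) := Pendant (1, 1)
/-- `S_3`: the pair of pendant edges at the corner `(1,0)`. -/
def PS3 : Set (Sym2 (ℤ × ℤ)) := Pendant (1, 0)
/-- `S_4`: the pair of pendant edges at the corner `(0,1)`. -/
def PS4 : Set (Sym2 (ℤ × ℤ)) := Pendant (0, 1)

def shareB : Sym2 (ℤ×ℤ) → Sym2 (ℤ×ℤ) → Bool :=
  Sym2.lift₂ ⟨fun a b c d => decide (a=c∨a=d∨b=c∨b=d), by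
    intros a b c d
    constructor <;> exact decide_eq_decide.mpr (by tauto)⟩

lemma share_iff (e1 e2 : Sym2 (ℤ×ℤ)) : shareB e1 e2 = true ↔ ∃ v, v ∈ e1 ∧ v ∈ e2 := by
  induction e1 using Sym2.ind with | _ a b =>
  induction e2 using Sym2.ind with | _ c d =>
  simp only [shareB, Sym2.lift₂_mk, decide_eq_true_eq, Sym2.mem_iff]
  constructor
  · rintro (rfl|rfl|rfl|rfl)
    · exact ⟨a, Or.inl rfl, Or.inl rfl⟩
    · exact ⟨a, Or.inl rfl, Or.inr rfl⟩
    · exact ⟨b, Or.inr rfl, Or.inl rfl⟩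
    · exact ⟨b, Or.inr rfl, Or.inr rfl⟩
  · rintro ⟨v, (rfl|rfl), (h|h)⟩ <;> tauto

def EL : List (Sym2 (ℤ×ℤ)) :=
  [s(((0:ℤ),(0:ℤ)),((1:ℤ),(0:ℤ))), s(((1:ℤ),(0:ℤ)),((1:ℤ),(1:ℤ))),
   s(((1:ℤ),(1:ℤ)),((0:ℤ),(1:ℤ))), s(((0:ℤ),(1:ℤ)),((0:ℤ),(0:ℤ))),
   s(((0:ℤ),(0:ℤ)),((-1:ℤ),(0:ℤ))), s(((0:ℤ),(0:ℤ)),((0:ℤ),(-1:ℤ))),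
   s(((1:ℤ),(0:ℤ)),((2:ℤ),(0:ℤ))), s(((1:ℤ),(0:ℤ)),((1:ℤ),(-1:ℤ))),
   s(((1:ℤ),(1:ℤ)),((2:ℤ),(1:ℤ))), s(((1:ℤ),(1:ℤ)),((1:ℤ),(2:ℤ))),
   s(((0:ℤ),(1:ℤ)),((-1:ℤ),(1:ℤ))), s(((0:ℤ),(1:ℤ)),((0:ℤ),(2:ℤ)))]

lemma abs1 (a b : ℤ) : |a| + |b| = 1 ↔ (a=1∧b=0)∨(a=-1∧b=0)∨(a=0∧b=1)∨(a=0∧b=-1) := by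
  rcases abs_cases a with ⟨h1,h2⟩|⟨h1,h2⟩ <;> rcases abs_cases b with ⟨h3,h4⟩|⟨h3,h4⟩ <;> omega

lemma mem_Q (u : ℤ×ℤ) : u ∈ Q ↔ u = (0,0) ∨ u = (1,0) ∨ u = (1,1) ∨ u = (0,1) := by
  simp [Q]

set_option maxHeartbeats 1000000 in
lemma edge_iff (e : Sym2 (ℤ×ℤ)) : e ∈ G4.edgeSet ↔ e ∈ EL := by
  induction e using Sym2.ind with | _ u w =>
  rw [SimpleGraph.mem_edgeSet]
  obtain ⟨u1, u2⟩ := u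
  obtain ⟨w1, w2⟩ := w
  show ((|u1 - w1| + |u2 - w2| = 1) ∧ ((u1,u2) ∈ Q ∨ (w1,w2) ∈ Q)) ↔ _
  rw [abs1, mem_Q, mem_Q]
  simp only [EL, List.mem_cons, List.not_mem_nil, or_false, Sym2.eq_iff, Prod.mk.injEq]
  constructor
  · rintro ⟨h1, h2⟩
    rcases h2 with (h|h|h|h)|(h|h|h|h) <;>
      obtain ⟨rfl, rfl⟩ := h <;> norm_num <;> omega
  · rintro (h|h|h|h|h|h|h|h|h|h|h|h) <;> rcases h with ⟨⟨h1,h2⟩,⟨h3,h4⟩⟩|⟨⟨h1,h2⟩,⟨h3,h4⟩⟩ <;>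
      subst h1 <;> subst h2 <;> subst h3 <;> subst h4 <;> norm_num

lemma core (f : Sym2 (ℤ×ℤ) → ℕ) (hf : IsL12 G4 f) (c : ℕ) (x y x' y' : Sym2 (ℤ×ℤ))
    (hxE : x ∈ EL) (hyE : y ∈ EL)
    (hx : f x = c) (hy : f y = c) (hx' : 2 ≤ |(f x' : ℤ) - (c:ℤ)|)
    (hfar : ∀ e ∈ EL, e = x ∨ e = x' ∨ e = y ∨ e = y' ∨
      (e ≠ x ∧ shareB e x = false ∧ ∃ e3 ∈ EL, shareB e e3 = true ∧ shareB x e3 = true) ∨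
      (e ≠ y ∧ shareB e y = false ∧ ∃ e3 ∈ EL, shareB e e3 = true ∧ shareB y e3 = true)) :
    (∀ e ∈ G4.edgeSet, f e ≠ c + 1) ∨ (∀ e ∈ G4.edgeSet, (f e : ℤ) ≠ (c:ℤ) - 1) := by
  have hx'2 : (c:ℤ) + 2 ≤ (f x' : ℤ) ∨ (f x' : ℤ) ≤ (c:ℤ) - 2 := by
    rcases abs_cases ((f x' : ℤ) - c) with ⟨h1,h2⟩|⟨h1,h2⟩ <;> omega
  have claim : ∀ e ∈ EL, ((f e : ℤ) = (c:ℤ)+1 ∨ (f e:ℤ) = (c:ℤ)-1) → e = y' := by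
    intro e heE hfe
    rcases hfar e heE with rfl|rfl|rfl|rfl|⟨hne,hns,e3,he3,hs1,hs2⟩|⟨hne,hns,e3,he3,hs1,hs2⟩
    · omega
    · omega
    · omega
    · rfl
    · exfalso
      have h2 := hf.2 e ((edge_iff e).2 heE) x ((edge_iff x).2 hxE) hne
        (by intro hsh; rw [← share_iff] at hsh; simp [hsh] at hns)
        ⟨e3, (edge_iff e3).2 he3, (share_iff e e3).1 hs1, (share_iff x e3).1 hs2⟩
      rcases abs_cases ((f e:ℤ) - (f x:ℤ)) with ⟨ha,hb⟩|⟨ha,hb⟩ <;> omega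
    · exfalso
      have h2 := hf.2 e ((edge_iff e).2 heE) y ((edge_iff y).2 hyE) hne
        (by intro hsh; rw [← share_iff] at hsh; simp [hsh] at hns)
        ⟨e3, (edge_iff e3).2 he3, (share_iff e e3).1 hs1, (share_iff y e3).1 hs2⟩
      rcases abs_cases ((f e:ℤ) - (f y:ℤ)) with ⟨ha,hb⟩|⟨ha,hb⟩ <;> omega
  by_contra hcon
  push_neg at hcon
  obtain ⟨⟨e1, he1, hf1⟩, ⟨e2, he2, hf2⟩⟩ := hcon
  have h1 := claim e1 ((edge_iff e1).1 he1) (Or.inl (by exact_mod_cast hf1))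
  have h2 := claim e2 ((edge_iff e2).1 he2) (Or.inr hf2)
  subst h1; subst h2
  omega

lemma PS1_cases : ∀ x ∈ PS1, x = s(((0:ℤ),(0:ℤ)),((-1:ℤ),(0:ℤ))) ∨ x = s(((0:ℤ),(0:ℤ)),((0:ℤ),(-1:ℤ))) := by
  rintro x ⟨hE, h0, w, hw, hwQ⟩
  have hm := (edge_iff x).1 hE
  simp only [EL, List.mem_cons, List.not_mem_nil, or_false] at hm
  rcases hm with rfl|rfl|rfl|rfl|rfl|rfl|rfl|rfl|rfl|rfl|rfl|rfl <;>
    first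
    | exact Or.inl rfl
    | exact Or.inr rfl
    | exact absurd h0 (by decide)
    | (rw [Sym2.mem_iff] at hw; rcases hw with rfl|rfl <;> exact absurd (by simp [Q]) hwQ)

lemma PS2_cases : ∀ x ∈ PS2, x = s(((1:ℤ),(1:ℤ)),((2:ℤ),(1:ℤ))) ∨ x = s(((1:ℤ),(1:ℤ)),((1:ℤ),(2:ℤ))) := by
  rintro x ⟨hE, h0, w, hw, hwQ⟩
  have hm := (edge_iff x).1 hE
  simp only [EL, List.mem_cons, List.not_mem_nil, or_false] at hm
  rcases hm with rfl|rfl|rfl|rfl|rfl|rfl|rfl|rfl|rfl|rfl|rfl|rfl <;>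
    first
    | exact Or.inl rfl
    | exact Or.inr rfl
    | exact absurd h0 (by decide)
    | (rw [Sym2.mem_iff] at hw; rcases hw with rfl|rfl <;> exact absurd (by simp [Q]) hwQ)

lemma PS3_cases : ∀ x ∈ PS3, x = s(((1:ℤ),(0:ℤ)),((2:ℤ),(0:ℤ))) ∨ x = s(((1:ℤ),(0:ℤ)),((1:ℤ),(-1:ℤ))) := by
  rintro x ⟨hE, h0, w, hw, hwQ⟩
  have hm := (edge_iff x).1 hE
  simp only [EL, List.mem_cons, List.not_mem_nil, or_false] at hm
  rcases hm with rfl|rfl|rfl|rfl|rfl|rfl|rfl|rfl|rfl|rfl|rfl|rfl <;>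
    first
    | exact Or.inl rfl
    | exact Or.inr rfl
    | exact absurd h0 (by decide)
    | (rw [Sym2.mem_iff] at hw; rcases hw with rfl|rfl <;> exact absurd (by simp [Q]) hwQ)

lemma PS4_cases : ∀ x ∈ PS4, x = s(((0:ℤ),(1:ℤ)),((-1:ℤ),(1:ℤ))) ∨ x = s(((0:ℤ),(1:ℤ)),((0:ℤ),(2:ℤ))) := by
  rintro x ⟨hE, h0, w, hw, hwQ⟩
  have hm := (edge_iff x).1 hE
  simp only [EL, List.mem_cons, List.not_mem_nil, or_false] at hm
  rcases hm with rfl|rfl|rfl|rfl|rfl|rfl|rfl|rfl|rfl|rfl|rfl|rfl <;>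
    first
    | exact Or.inl rfl
    | exact Or.inr rfl
    | exact absurd h0 (by decide)
    | (rw [Sym2.mem_iff] at hw; rcases hw with rfl|rfl <;> exact absurd (by simp [Q]) hwQ)

set_option maxHeartbeats 4000000 in
/-- Suppose `x ∈ S_1` and `y ∈ S_2` have the common label `c`. If the other edge
`x'` of `S_1` satisfies `|f x' - c| ≥ 2`, then one of `c + 1`, `c - 1` is not the
label of any edge of `G`; likewise for the other edge `y'` of `S_2`, and
analogously with `S_3`, `S_4` in place of `S_1`, `S_2`. -/
theorem G4_unused_neighbor_label (f : Sym2 (ℤ × ℤ) → ℕ) (hf : IsL12 G4 f)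
    (c : ℕ) :
    (∀ x ∈ PS1, ∀ y ∈ PS2, f x = c → f y = c →
      (∀ x' ∈ PS1, x' ≠ x → 2 ≤ |(f x' : ℤ) - (c : ℤ)| →
        (∀ e ∈ G4.edgeSet, f e ≠ c + 1) ∨ (∀ e ∈ G4.edgeSet, (f e : ℤ) ≠ (c : ℤ) - 1)) ∧
      (∀ y' ∈ PS2, y' ≠ y → 2 ≤ |(f y' : ℤ) - (c : ℤ)| →
        (∀ e ∈ G4.edgeSet, f e ≠ c + 1) ∨ (∀ e ∈ G4.edgeSet, (f e : ℤ) ≠ (c : ℤ) - 1))) ∧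
    (∀ x ∈ PS3, ∀ y ∈ PS4, f x = c → f y = c →
      (∀ x' ∈ PS3, x' ≠ x → 2 ≤ |(f x' : ℤ) - (c : ℤ)| →
        (∀ e ∈ G4.edgeSet, f e ≠ c + 1) ∨ (∀ e ∈ G4.edgeSet, (f e : ℤ) ≠ (c : ℤ) - 1)) ∧
      (∀ y' ∈ PS4, y' ≠ y → 2 ≤ |(f y' : ℤ) - (c : ℤ)| →
        (∀ e ∈ G4.edgeSet, f e ≠ c + 1) ∨ (∀ e ∈ G4.edgeSet, (f e : ℤ) ≠ (c : ℤ) - 1))) := by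
  constructor
  · intro x hx y hy hfx hfy
    constructor
    · intro x' hx' hne hd
      rcases PS1_cases _ hx with rfl|rfl <;> rcases PS2_cases _ hy with rfl|rfl <;>
        rcases PS1_cases _ hx' with rfl|rfl <;>
        first
        | exact absurd rfl hne
        | exact core f hf c _ _ _ s(((1:ℤ),(1:ℤ)),((1:ℤ),(2:ℤ))) (by decide) (by decide) hfx hfy hd (by decide)
        | exact core f hf c _ _ _ s(((1:ℤ),(1:ℤ)),((2:ℤ),(1:ℤ))) (by decide) (by decide) hfx hfy hd (by decide)
    · intro y' hy' hne hd
      rcases PS1_cases _ hx with rfl|rfl <;> rcases PS2_cases _ hy with rfl|rfl <;>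
        rcases PS2_cases _ hy' with rfl|rfl <;>
        first
        | exact absurd rfl hne
        | exact core f hf c _ _ _ s(((0:ℤ),(0:ℤ)),((0:ℤ),(-1:ℤ))) (by decide) (by decide) hfy hfx hd (by decide)
        | exact core f hf c _ _ _ s(((0:ℤ),(0:ℤ)),((-1:ℤ),(0:ℤ))) (by decide) (by decide) hfy hfx hd (by decide)
  · intro x hx y hy hfx hfy
    constructor
    · intro x' hx' hne hd
      rcases PS3_cases _ hx with rfl|rfl <;> rcases PS4_cases _ hy with rfl|rfl <;>
        rcases PS3_cases _ hx' with rfl|rfl <;>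
        first
        | exact absurd rfl hne
        | exact core f hf c _ _ _ s(((0:ℤ),(1:ℤ)),((0:ℤ),(2:ℤ))) (by decide) (by decide) hfx hfy hd (by decide)
        | exact core f hf c _ _ _ s(((0:ℤ),(1:ℤ)),((-1:ℤ),(1:ℤ))) (by decide) (by decide) hfx hfy hd (by decide)
    · intro y' hy' hne hd
      rcases PS3_cases _ hx with rfl|rfl <;> rcases PS4_cases _ hy with rfl|rfl <;>
        rcases PS4_cases _ hy' with rfl|rfl <;>
        first
        | exact absurd rfl hne
        | exact core f hf c _ _ _ s(((1:ℤ),(0:ℤ)),((1:ℤ),(-1:ℤ))) (by decide) (by decide) hfy hfx hd (by decide)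
        | exact core f hf c _ _ _ s(((1:ℤ),(0:ℤ)),((2:ℤ),(0:ℤ))) (by decide) (by decide) hfy hfx hd (by decide)
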